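/- Let A be a finite-dimensional unital associative F-algebra with a group homomorphism σ : G → A^× from a finite group G, let U and V be subgroups of G, let φ : V → U be a group isomorphism, let i and i' be idempotents of A^U, and let j be an idempotent of A^V. If there exist a φ-witness j ↦ i and a φ-witness j ↦ i', then there exists a unit r ∈ A^× with σ(u) r = r σ(u) for all u ∈ U such that i = r i' r⁻¹. -/

import Mathlib

open LinearMap Submodule Module

universe v

section ModuleTheory

variable {F : Type*} [Field F] {B : Type*} [Ring B] [Algebra F B]

def IndecMod (B : Type*) [Ring B] (M : Type v) [AddCommGroup M] [Module B M] : Prop :=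
  Nontrivial M ∧ ∀ N N' : Submodule B M, IsCompl N N' → N = ⊥ ∨ N' = ⊥

/-- If `g ∘ k` is a unit, then `range k` and `ker g` are complementary. -/
lemma isCompl_range_ker_aux {M N : Type v} [AddCommGroup M] [Module B M]
    [AddCommGroup N] [Module B N]
    (k : M →ₗ[B] N) (g : N →ₗ[B] M) (h : IsUnit (g ∘ₗ k)) :
    IsCompl (LinearMap.range k) (LinearMap.ker g) := by
  obtain ⟨u, hu⟩ := h
  have h1 : (g ∘ₗ k) * ↑u⁻¹ = 1 := by rw [← hu, u.mul_inv]
  have h2 : (↑u⁻¹ : Module.End B M) * (g ∘ₗ k) = 1 := by rw [← hu, u.inv_mul]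
  constructor
  · rw [disjoint_iff_inf_le]
    rintro x ⟨⟨m, rfl⟩, hx2⟩
    have : g (k m) = 0 := hx2
    have hm : m = 0 := by
      have := congrArg (fun z => (↑u⁻¹ : Module.End B M) z) this
      simp only [map_zero] at this
      have h2m := congrFun (congrArg (fun (z : Module.End B M) => (z : M → M)) h2) m
      simp only [Module.End.mul_apply, LinearMap.comp_apply, Module.End.one_apply] at h2m
      rw [← h2m, this]
    simp [hm]
  · rw [codisjoint_iff_le_sup]
    intro x _
    have hxdec : x = k ((↑u⁻¹ : Module.End B M) (g x)) + (x - k ((↑u⁻¹ : Module.End B M) (g x))) := by abel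
    rw [Submodule.mem_sup]
    refine ⟨_, ⟨_, rfl⟩, x - k ((↑u⁻¹ : Module.End B M) (g x)), ?_, hxdec.symm⟩
    rw [LinearMap.mem_ker, map_sub]
    have h1x := congrFun (congrArg (fun (z : Module.End B M) => (z : M → M)) h1) (g x)
    simp only [Module.End.mul_apply, LinearMap.comp_apply, Module.End.one_apply] at h1x
    rw [h1x, sub_self]

variable {M : Type v} [AddCommGroup M] [Module B M]
  [Module F M] [IsScalarTower F B M] [FiniteDimensional F M]

include F

lemma bij_of_surj (f : Module.End B M) (h : Function.Surjective f) : Function.Bijective f := by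
  have h2 : Function.Surjective (f.restrictScalars F) := h
  have hinj : Function.Injective (f.restrictScalars F) :=
    (LinearMap.injective_iff_surjective (f := f.restrictScalars F)).mpr h2
  exact ⟨hinj, h⟩

lemma bij_of_inj (f : Module.End B M) (h : Function.Injective f) : Function.Bijective f := by
  have h2 : Function.Injective (f.restrictScalars F) := h
  have hsurj : Function.Surjective (f.restrictScalars F) :=
    (LinearMap.injective_iff_surjective (f := f.restrictScalars F)).mp h2
  exact ⟨h, hsurj⟩

lemma nilpotent_or_unit (hM : IndecMod B M) (f : Module.End B M) :
    IsNilpotent f ∨ IsUnit f := by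
  haveI : IsNoetherian B M := isNoetherian_of_tower F inferInstance
  haveI : IsArtinian B M := isArtinian_of_tower F inferInstance
  obtain ⟨n, hn⟩ := Filter.eventually_atTop.mp f.eventually_isCompl_ker_pow_range_pow
  have h := hn (n + 1) (Nat.le_succ n)
  rcases hM.2 _ _ h with h1 | h2
  · right
    rw [Module.End.isUnit_iff]
    have hinj : Function.Injective (f ^ (n + 1)) := by
      rw [← LinearMap.ker_eq_bot]; exact h1
    have : Function.Injective f := by
      intro x y hxy
      apply hinj
      have hp : (f ^ (n + 1)) = (f ^ n) * f := pow_succ f n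
      rw [hp, Module.End.mul_apply, Module.End.mul_apply, hxy]
    exact bij_of_inj (F := F) f this
  · left
    exact ⟨n + 1, by rwa [← LinearMap.range_eq_bot]⟩

/-- The stable-range-one style property needed for Evans' cancellation argument. -/
lemma exists_unit_add (hM : IndecMod B M) (a x : Module.End B M) :
    ∃ e : Module.End B M, IsUnit (a + (1 - a * x) * e) := by
  by_cases ha : IsUnit a
  · exact ⟨0, by simpa using ha⟩
  · have hax : ¬ IsUnit (a * x) := by
      intro h
      apply ha
      rw [Module.End.isUnit_iff] at h
      have hsurj : Function.Surjective a := by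
        intro y
        obtain ⟨z, hz⟩ := h.2 y
        exact ⟨x z, hz⟩
      rw [Module.End.isUnit_iff]
      exact bij_of_surj (F := F) a hsurj
    rcases nilpotent_or_unit (F := F) hM (a * x) with hn | hu
    · obtain ⟨c, hc⟩ := hn.isUnit_one_sub
      refine ⟨(↑c⁻¹ : Module.End B M) * (1 - a), ?_⟩
      have : (1 - a * x) * ((↑c⁻¹ : Module.End B M) * (1 - a)) = 1 - a := by
        rw [← hc, ← mul_assoc, c.mul_inv, one_mul]
      rw [this]
      simpa using isUnit_one
    · exact absurd hu hax

end ModuleTheory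

section CancelIndec
variable {F : Type*} [Field F] {B : Type*} [Ring B] [Algebra F B]
variable {M : Type v} [AddCommGroup M] [Module B M]
  [Module F M] [IsScalarTower F B M] [FiniteDimensional F M]

include F in
lemma cancel_indec {X Y : Type v} [AddCommGroup X] [Module B X] [AddCommGroup Y] [Module B Y]
    (hM : IndecMod B M) (ω : (M × X) ≃ₗ[B] (M × Y)) : Nonempty (X ≃ₗ[B] Y) := by
  set f : (M × X) →ₗ[B] M := LinearMap.fst B M X with hf
  set f' : M →ₗ[B] (M × X) := LinearMap.inl B M X with hf'
  set g : (M × X) →ₗ[B] M := (LinearMap.fst B M Y).comp ω.toLinearMap with hg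
  set g' : M →ₗ[B] (M × X) := ω.symm.toLinearMap.comp (LinearMap.inl B M Y) with hg'
  have hgg' : ∀ m, g (g' m) = m := by
    intro m
    simp [hg, hg']
  have hff' : ∀ m, f (f' m) = m := fun m => rfl
  set a : Module.End B M := f ∘ₗ g' with hA
  set xx : Module.End B M := g ∘ₗ f' with hX
  obtain ⟨e, he⟩ := exists_unit_add (F := F) hM a xx
  set k : M →ₗ[B] (M × X) := g' + (f' ∘ₗ e) - g' ∘ₗ (g ∘ₗ (f' ∘ₗ e)) with hk
  have hgk : ∀ m, g (k m) = m := by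
    intro m
    simp only [hk, LinearMap.sub_apply, LinearMap.add_apply, LinearMap.comp_apply, map_add,
      map_sub, hgg']
    abel
  have hfk : f ∘ₗ k = a + (1 - a * xx) * e := by
    ext m
    simp only [hk, LinearMap.sub_apply, LinearMap.add_apply, LinearMap.comp_apply, map_add,
      map_sub, hA, hX, Module.End.mul_apply, LinearMap.sub_apply, Module.End.one_apply, hff']
    abel
  have hcg : IsCompl (LinearMap.range k) (LinearMap.ker g) := by
    apply isCompl_range_ker_aux k g
    have : g ∘ₗ k = 1 := by
      ext m; exact hgk m
    rw [this]; exact isUnit_one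
  have hcf : IsCompl (LinearMap.range k) (LinearMap.ker f) := by
    apply isCompl_range_ker_aux k f
    rw [hfk]; exact he
  -- X ≅ ker f
  have eX : X ≃ₗ[B] (LinearMap.ker f) := by
    refine LinearEquiv.ofLinear
      ((LinearMap.inr B M X).codRestrict (LinearMap.ker f) (fun x => by simp [hf]))
      ((LinearMap.snd B M X) ∘ₗ (LinearMap.ker f).subtype) ?_ ?_
    · ext ⟨⟨m, x⟩, hp⟩
      · exact (show (m : M) = 0 from hp).symm
      · rfl
    · ext x
      simp
      rfl
  -- Y ≅ ker g
  have hmapeq : Submodule.map (ω.symm : (M × Y) →ₗ[B] (M × X))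
      (LinearMap.ker (LinearMap.fst B M Y)) = LinearMap.ker g := by
    have h1 : LinearMap.ker g = Submodule.comap (ω : (M × X) →ₗ[B] (M × Y))
        (LinearMap.ker (LinearMap.fst B M Y)) := by
      rw [hg, LinearMap.ker_comp]
    rw [h1, Submodule.comap_equiv_eq_map_symm]
  have eY0 : Y ≃ₗ[B] (LinearMap.ker (LinearMap.fst B M Y)) := by
    refine LinearEquiv.ofLinear
      ((LinearMap.inr B M Y).codRestrict _ (fun y => by simp))
      ((LinearMap.snd B M Y) ∘ₗ (LinearMap.ker (LinearMap.fst B M Y)).subtype) ?_ ?_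
    · ext ⟨⟨m, y⟩, hp⟩
      · exact (show (m : M) = 0 from hp).symm
      · rfl
    · ext y
      simp
      rfl
  have eY : Y ≃ₗ[B] (LinearMap.ker g) :=
    eY0.trans ((LinearEquiv.submoduleMap ω.symm _).trans (LinearEquiv.ofEq _ _ hmapeq))
  exact ⟨eX.trans ((((Submodule.quotientEquivOfIsCompl _ _ hcf).symm).trans
    (Submodule.quotientEquivOfIsCompl _ _ hcg)).trans eY.symm)⟩


end CancelIndec

section CancelAux
variable {F : Type*} [Field F] {B : Type*} [Ring B] [Algebra F B]

/-- If `M` is trivial, `X ≃ M × X`. -/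
def subsingletonProdEquiv (M X : Type v) [AddCommGroup M] [Module B M] [Subsingleton M]
    [AddCommGroup X] [Module B X] : X ≃ₗ[B] (M × X) :=
  LinearEquiv.ofLinear (LinearMap.inr B M X) (LinearMap.snd B M X)
    (by apply LinearMap.ext
        rintro ⟨m, x⟩
        show ((0 : M), x) = (m, x)
        rw [Subsingleton.elim (0 : M) m])
    (by ext x; rfl)

lemma cancel_aux (F : Type*) [Field F] {B : Type*} [Ring B] [Algebra F B] :
    ∀ (n : ℕ) (M X Y : Type v) [AddCommGroup M] [Module B M] [Module F M]
      [IsScalarTower F B M] [FiniteDimensional F M] [AddCommGroup X] [Module B X]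
      [AddCommGroup Y] [Module B Y],
      Module.finrank F M ≤ n → ((M × X) ≃ₗ[B] (M × Y)) → Nonempty (X ≃ₗ[B] Y) := by
  intro n
  induction n with
  | zero =>
    intro M X Y _ _ _ _ _ _ _ _ _ hr ω
    haveI : Subsingleton M := by
      have h0 : Module.finrank F M = 0 := le_antisymm hr (Nat.zero_le _)
      exact (Module.finrank_zero_iff (R := F)).mp h0
    exact ⟨(subsingletonProdEquiv M X).trans (ω.trans (subsingletonProdEquiv M Y).symm)⟩
  | succ n ih =>
    intro M X Y _ _ _ _ _ _ _ _ _ hr ω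
    rcases subsingleton_or_nontrivial M with hs | hnt
    · exact ⟨(subsingletonProdEquiv M X).trans (ω.trans (subsingletonProdEquiv M Y).symm)⟩
    by_cases hind : IndecMod B M
    · exact cancel_indec (F := F) hind ω
    rw [IndecMod, not_and] at hind
    have h2 := hind hnt
    push_neg at h2
    obtain ⟨N, N', hc, hN, hN'⟩ := h2
    haveI : FiniteDimensional F ↥N :=
      FiniteDimensional.of_injective (N.subtype.restrictScalars F) Subtype.coe_injective
    haveI : FiniteDimensional F ↥N' :=
      FiniteDimensional.of_injective (N'.subtype.restrictScalars F) Subtype.coe_injective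
    haveI : Nontrivial ↥N := Submodule.nontrivial_iff_ne_bot.mpr hN
    haveI : Nontrivial ↥N' := Submodule.nontrivial_iff_ne_bot.mpr hN'
    set pe := Submodule.prodEquivOfIsCompl N N' hc with hpe
    have hfr : finrank F ↥N + finrank F ↥N' = finrank F M := by
      have h1 := (pe.restrictScalars F).finrank_eq
      rwa [Module.finrank_prod] at h1
    have hposN : 0 < finrank F ↥N := Module.finrank_pos
    have hposN' : 0 < finrank F ↥N' := Module.finrank_pos
    have hb1 : finrank F ↥N ≤ n := by omega
    have hb2 : finrank F ↥N' ≤ n := by omega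
    have ω1 : (↥N × (↥N' × X)) ≃ₗ[B] (↥N × (↥N' × Y)) :=
      (LinearEquiv.prodAssoc B ↥N ↥N' X).symm ≪≫ₗ (pe.prodCongr (LinearEquiv.refl B X)) ≪≫ₗ ω
        ≪≫ₗ (pe.prodCongr (LinearEquiv.refl B Y)).symm ≪≫ₗ (LinearEquiv.prodAssoc B ↥N ↥N' Y)
    obtain ⟨ψ⟩ := ih ↥N (↥N' × X) (↥N' × Y) hb1 ω1
    exact ih ↥N' X Y hb2 ψ


end CancelAux

/-- Equivalent idempotents in a finite-dimensional algebra are conjugate. -/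
theorem conj_of_equiv_idem (F : Type*) [Field F] (B : Type v) [Ring B] [Algebra F B]
    [FiniteDimensional F B] (e f a b : B)
    (hab : a * b = e) (hba : b * a = f)
    (hea : e * a = a) (haf : a * f = a) (hfb : f * b = b) (hbe : b * e = b) :
    ∃ u : Bˣ, e = (u : B) * f * ((u⁻¹ : Bˣ) : B) := by
  classical
  -- the four corner submodules of B (as a left module over itself)
  set ρe : B →ₗ[B] B := LinearMap.toSpanSingleton B B e with hρe
  set ρf : B →ₗ[B] B := LinearMap.toSpanSingleton B B f with hρf
  have he : e * e = e := by rw [← hab, ← mul_assoc, mul_assoc a b a, hba, haf, hab]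
  have hf : f * f = f := by rw [← hba, ← mul_assoc, mul_assoc b a b, hab, hbe, hba]
  set P : Submodule B B := LinearMap.range ρe with hP
  set P' : Submodule B B := LinearMap.ker ρe with hP'
  set Q : Submodule B B := LinearMap.range ρf with hQ
  set Q' : Submodule B B := LinearMap.ker ρf with hQ'
  have memP : ∀ x : B, x ∈ P ↔ x * e = x := by
    intro x
    constructor
    · rintro ⟨y, rfl⟩
      show (y • e) * e = y • e
      simp [smul_eq_mul, mul_assoc, he]
    · intro hx
      exact ⟨x, by simpa [hρe, smul_eq_mul] using hx⟩
  have memQ : ∀ x : B, x ∈ Q ↔ x * f = x := by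
    intro x
    constructor
    · rintro ⟨y, rfl⟩
      show (y • f) * f = y • f
      simp [smul_eq_mul, mul_assoc, hf]
    · intro hx
      exact ⟨x, by simpa [hρf, smul_eq_mul] using hx⟩
  have memP' : ∀ x : B, x ∈ P' ↔ x * e = 0 := by
    intro x; rw [hP', LinearMap.mem_ker]; rfl
  have memQ' : ∀ x : B, x ∈ Q' ↔ x * f = 0 := by
    intro x; rw [hQ', LinearMap.mem_ker]; rfl
  have hPP' : IsCompl P P' := by
    constructor
    · rw [disjoint_iff_inf_le]
      rintro x ⟨h1, h2⟩
      rw [SetLike.mem_coe, memP] at h1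
      rw [SetLike.mem_coe, memP'] at h2
      have hx0 : x = 0 := by rw [← h1, h2]
      simp [hx0]
    · rw [codisjoint_iff_le_sup]
      intro x _
      rw [Submodule.mem_sup]
      exact ⟨x * e, (memP _).mpr (by rw [mul_assoc, he]), x - x * e,
        (memP' _).mpr (by rw [sub_mul, mul_assoc, he, sub_self]), by abel⟩
  have hQQ' : IsCompl Q Q' := by
    constructor
    · rw [disjoint_iff_inf_le]
      rintro x ⟨h1, h2⟩
      rw [SetLike.mem_coe, memQ] at h1
      rw [SetLike.mem_coe, memQ'] at h2
      have hx0 : x = 0 := by rw [← h1, h2]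
      simp [hx0]
    · rw [codisjoint_iff_le_sup]
      intro x _
      rw [Submodule.mem_sup]
      exact ⟨x * f, (memQ _).mpr (by rw [mul_assoc, hf]), x - x * f,
        (memQ' _).mpr (by rw [sub_mul, mul_assoc, hf, sub_self]), by abel⟩
  -- the isomorphism P ≃ Q given by right multiplication with a (inverse: b)
  have hPQmapsto : ∀ x : B, x ∈ P → x * a ∈ Q := by
    intro x _
    rw [memQ, mul_assoc, haf]
  have hQPmapsto : ∀ x : B, x ∈ Q → x * b ∈ P := by
    intro x _
    rw [memP, mul_assoc, hbe]
  set φa : P →ₗ[B] Q :=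
    ((LinearMap.toSpanSingleton B B a).domRestrict P).codRestrict Q
      (fun x => hPQmapsto x x.2) with hφa
  set φb : Q →ₗ[B] P :=
    ((LinearMap.toSpanSingleton B B b).domRestrict Q).codRestrict P
      (fun x => hQPmapsto x x.2) with hφb
  have hφab : ∀ x : P, φb (φa x) = x := by
    rintro ⟨x, hx⟩
    apply Subtype.ext
    show x * a * b = x
    rw [mul_assoc, hab, (memP x).mp hx]
  have hφba : ∀ x : Q, φa (φb x) = x := by
    rintro ⟨x, hx⟩
    apply Subtype.ext
    show x * b * a = x
    rw [mul_assoc, hba, (memQ x).mp hx]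
  set φ : P ≃ₗ[B] Q := LinearEquiv.ofLinear φa φb
    (LinearMap.ext fun x => hφba x) (LinearMap.ext fun x => hφab x) with hφ
  -- cancellation: P' ≃ Q'
  haveI : FiniteDimensional F ↥Q :=
    FiniteDimensional.of_injective (Q.subtype.restrictScalars F) Subtype.coe_injective
  have ωbig : (↥Q × ↥P') ≃ₗ[B] (↥Q × ↥Q') :=
    (LinearEquiv.prodCongr φ.symm (LinearEquiv.refl B ↥P')) ≪≫ₗ
      (Submodule.prodEquivOfIsCompl P P' hPP') ≪≫ₗ
      (Submodule.prodEquivOfIsCompl Q Q' hQQ').symm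
  obtain ⟨ψ⟩ := cancel_aux F (Module.finrank F ↥Q) ↥Q ↥P' ↥Q' le_rfl ωbig
  -- assemble the automorphism of B
  set Θ : B ≃ₗ[B] B :=
    (Submodule.prodEquivOfIsCompl P P' hPP').symm ≪≫ₗ (LinearEquiv.prodCongr φ ψ)
      ≪≫ₗ (Submodule.prodEquivOfIsCompl Q Q' hQQ') with hΘ
  set u : B := Θ 1 with hu
  set v : B := Θ.symm 1 with hv
  have hmulu : ∀ x : B, Θ x = x * u := by
    intro x
    have : Θ (x • (1 : B)) = x • Θ 1 := Θ.map_smul x 1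
    simpa [smul_eq_mul] using this
  have hmulv : ∀ x : B, Θ.symm x = x * v := by
    intro x
    have : Θ.symm (x • (1 : B)) = x • Θ.symm 1 := Θ.symm.map_smul x 1
    simpa [smul_eq_mul] using this
  have huv : u * v = 1 := by
    have h1 : Θ.symm (Θ 1) = 1 := Θ.symm_apply_apply 1
    rwa [hmulu 1, one_mul, hmulv u] at h1
  have hvu : v * u = 1 := by
    have h1 : Θ (Θ.symm 1) = 1 := Θ.apply_symm_apply 1
    rwa [hmulv 1, one_mul, hmulu v] at h1
  -- compute Θ e = a and the decomposition of Θ 1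
  have hPdec : ∀ (z : P) (z' : P'), Θ ((z : B) + (z' : B)) = (φ z : B) + (ψ z' : B) := by
    intro z z'
    have h1 : (Submodule.prodEquivOfIsCompl P P' hPP') (z, z') = (z : B) + (z' : B) :=
      Submodule.coe_prodEquivOfIsCompl' P P' hPP' (z, z')
    have h2 : (Submodule.prodEquivOfIsCompl P P' hPP').symm ((z : B) + (z' : B)) = (z, z') := by
      rw [← h1, LinearEquiv.symm_apply_apply]
    rw [hΘ]
    simp only [LinearEquiv.trans_apply, h2]
    exact Submodule.coe_prodEquivOfIsCompl' Q Q' hQQ' _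
  have hεP : e ∈ P := (memP e).mpr he
  have h1decomp : (1 : B) = ((⟨e, hεP⟩ : P) : B) + ((⟨1 - e, (memP' _).mpr (by
      rw [sub_mul, one_mul, he, sub_self])⟩ : P') : B) := by simp
  have hφe : (φ ⟨e, hεP⟩ : B) = a := by
    show e * a = a
    exact hea
  -- Θ 1 = a + w with w ∈ Q'
  set w : B := (ψ ⟨1 - e, (memP' _).mpr (by rw [sub_mul, one_mul, he, sub_self])⟩ : B) with hw
  have hΘ1 : u = a + w := by
    rw [hu, h1decomp, hPdec, hφe]
  have hwf : w * f = 0 := (memQ' w).mp (ψ _).2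
  -- Θ e = a, i.e. e * u = a
  have hΘe : e * u = a := by
    have h0 : Θ e = e * u := hmulu e
    have hdec : Θ ((⟨e, hεP⟩ : P) : B) = φ ⟨e, hεP⟩ := by
      have := hPdec ⟨e, hεP⟩ 0
      simpa using this
    rw [← h0, hdec, hφe]
  have huf : u * f = a := by
    rw [hΘ1, add_mul, haf, hwf, add_zero]
  refine ⟨⟨u, v, huv, hvu⟩, ?_⟩
  show e = u * f * v
  rw [huf, ← hΘe, mul_assoc, huv, mul_one]


/-- For an interior `G`-algebra `A` with structural homomorphism `σ : G → Aˣ`, subgroups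
`U, V ≤ G`, a group isomorphism `φ : V → U` and idempotents `i ∈ A^U`, `j ∈ A^V`, a pair
`(s, s')` is a `φ`-witness `j ↦ i` when `s ∈ i A^φ j`, `s' ∈ j A^{φ⁻¹} i`, `s s' = i` and
`s' s = j`.  Here `A^φ = {a : σ(φ(v)) a = a σ(v) for all v ∈ V}`, and membership in
`i A^φ j` is recorded as lying in `A^φ` and being fixed by left multiplication by `i` and
right multiplication by `j`. -/
def IsWitness {G : Type*} [Group G] {A : Type*} [Ring A] (σ : G →* Aˣ)
    {U V : Subgroup G} (φ : V ≃* U) (i j s s' : A) : Prop :=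
  (∀ v : V, (σ ((φ v : U) : G) : A) * s = s * (σ (v : G) : A)) ∧
    i * s = s ∧ s * j = s ∧
  (∀ u : U, (σ ((φ.symm u : V) : G) : A) * s' = s' * (σ (u : G) : A)) ∧
    j * s' = s' ∧ s' * i = s' ∧
  s * s' = i ∧ s' * s = j

/-- Lemma 4.2 (uniqueness of the point up to conjugacy): if idempotents `i, i' ∈ A^U` are
both witnessed from the same idempotent `j ∈ A^V` along `φ`, then `i` and `i'` are
conjugate by a unit of `A` commuting with `σ(u)` for all `u ∈ U`. -/
theorem stmt7 (F : Type*) [Field F] (A : Type*) [Ring A] [Algebra F A]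
    [FiniteDimensional F A] (G : Type*) [Group G] [Finite G] (σ : G →* Aˣ)
    (U V : Subgroup G) (φ : V ≃* U) (i i' j : A)
    (hi : i * i = i) (hiU : ∀ u : U, (σ (u : G) : A) * i = i * (σ (u : G) : A))
    (hi' : i' * i' = i') (hi'U : ∀ u : U, (σ (u : G) : A) * i' = i' * (σ (u : G) : A))
    (hj : j * j = j) (hjV : ∀ v : V, (σ (v : G) : A) * j = j * (σ (v : G) : A))
    (hw : ∃ s s' : A, IsWitness σ φ i j s s')
    (hw' : ∃ t t' : A, IsWitness σ φ i' j t t') :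
    ∃ r : Aˣ, (∀ u : U, (σ (u : G) : A) * (r : A) = (r : A) * (σ (u : G) : A)) ∧
      i = (r : A) * i' * ((r⁻¹ : Aˣ) : A) := by
  classical
  obtain ⟨s, s', hwss⟩ := hw
  obtain ⟨t, t', hwtt⟩ := hw'
  obtain ⟨hs1, hs2, hs3, hs4, hs5, hs6, hs7, hs8⟩ := hwss
  obtain ⟨ht1, ht2, ht3, ht4, ht5, ht6, ht7, ht8⟩ := hwtt
  -- the fixed-point subalgebra A^U as a centralizer
  set S : Set A := Set.range (fun u : U => ((σ (u : G) : A))) with hS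
  set B : Subalgebra F A := Subalgebra.centralizer F S with hB
  have memB : ∀ x : A, x ∈ B ↔ ∀ u : U, (σ (u : G) : A) * x = x * (σ (u : G) : A) := by
    intro x
    rw [hB, Subalgebra.mem_centralizer_iff]
    constructor
    · intro h u
      exact h _ ⟨u, rfl⟩
    · rintro h g ⟨u, rfl⟩
      exact h u
  -- the elements of interest lie in B
  have hiB : i ∈ B := (memB i).mpr hiU
  have hi'B : i' ∈ B := (memB i').mpr hi'U
  -- a = s * t' ∈ B : σ(u) s = s σ(φ⁻¹ u), σ(φ⁻¹ u) t' = t' σ(u)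
  have hsu : ∀ u : U, (σ (u : G) : A) * s = s * (σ ((φ.symm u : V) : G) : A) := by
    intro u
    have := hs1 (φ.symm u)
    rwa [MulEquiv.apply_symm_apply] at this
  have htu : ∀ u : U, (σ (u : G) : A) * t = t * (σ ((φ.symm u : V) : G) : A) := by
    intro u
    have := ht1 (φ.symm u)
    rwa [MulEquiv.apply_symm_apply] at this
  have haB : s * t' ∈ B := by
    rw [memB]
    intro u
    rw [← mul_assoc, hsu u, mul_assoc, ht4 u, ← mul_assoc]
  have hbB : t * s' ∈ B := by
    rw [memB]
    intro u
    rw [← mul_assoc, htu u, mul_assoc, hs4 u, ← mul_assoc]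
  -- relations among the corner elements
  have hab : (s * t') * (t * s') = i := by
    calc (s * t') * (t * s') = s * ((t' * t) * s') := by rw [mul_assoc, mul_assoc]
      _ = s * (j * s') := by rw [ht8]
      _ = s * s' := by rw [hs5]
      _ = i := hs7
  have hba : (t * s') * (s * t') = i' := by
    calc (t * s') * (s * t') = t * ((s' * s) * t') := by rw [mul_assoc, mul_assoc]
      _ = t * (j * t') := by rw [hs8]
      _ = t * t' := by rw [ht5]
      _ = i' := ht7
  have hea : i * (s * t') = s * t' := by rw [← mul_assoc, hs2]
  have haf : (s * t') * i' = s * t' := by rw [mul_assoc, ht6]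
  have hfb : i' * (t * s') = t * s' := by rw [← mul_assoc, ht2]
  have hbe : (t * s') * i = t * s' := by rw [mul_assoc, hs6]
  -- pass to the subalgebra B
  haveI : FiniteDimensional F ↥B :=
    FiniteDimensional.of_injective (B.val.toLinearMap) Subtype.coe_injective
  obtain ⟨u, hconj⟩ := conj_of_equiv_idem F ↥B ⟨i, hiB⟩ ⟨i', hi'B⟩ ⟨s * t', haB⟩ ⟨t * s', hbB⟩
    (Subtype.ext hab) (Subtype.ext hba) (Subtype.ext hea) (Subtype.ext haf)
    (Subtype.ext hfb) (Subtype.ext hbe)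
  refine ⟨⟨((u : ↥B) : A), (((u⁻¹ : (↥B)ˣ) : ↥B) : A), ?_, ?_⟩, ?_, ?_⟩
  · show ((u : ↥B) : A) * (((u⁻¹ : (↥B)ˣ) : ↥B) : A) = 1
    rw [← MulMemClass.coe_mul, Units.mul_inv, OneMemClass.coe_one]
  · show (((u⁻¹ : (↥B)ˣ) : ↥B) : A) * ((u : ↥B) : A) = 1
    rw [← MulMemClass.coe_mul, Units.inv_mul, OneMemClass.coe_one]
  · intro uu
    exact (memB _).mp (SetLike.coe_mem (u : ↥B)) uu
  · have h1 := congrArg (fun z : ↥B => (z : A)) hconj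
    simpa using h1
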